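/- If every nonempty open subset of a topological space $X$ contains a nonempty $\kappa$-resolvable subspace, then $X$ itself is $\kappa$-resolvable. -/
import Mathlib


open Cardinal Set

/-- A space `Z` is `κ`-resolvable if it admits a partition into `κ` many
pairwise disjoint dense subsets. -/
def KResolvable (κ : Cardinal) (Z : Type*) [TopologicalSpace Z] : Prop :=
  ∃ D : (Quotient.out κ) → Set Z,
    (⋃ i, D i) = Set.univ ∧ Pairwise (Function.onFun Disjoint D) ∧ ∀ i, Dense (D i)

/-- If every nonempty open subset of `X` contains a nonempty
`κ`-resolvable subspace, then `X` itself is `κ`-resolvable. -/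
theorem stmt4 (κ : Cardinal) (X : Type*) [TopologicalSpace X]
    (h : ∀ U : Set X, IsOpen U → U.Nonempty →
      ∃ S : Set X, S ⊆ U ∧ S.Nonempty ∧ KResolvable κ S) :
    KResolvable κ X := by
  classical
  by_cases hX : Nonempty X
  swap
  · rw [not_nonempty_iff] at hX
    refine ⟨fun _ => ∅, ?_, ?_, ?_⟩
    · simp [Set.univ_eq_empty_iff.2 hX]
    · intro i j hij; simp [Function.onFun]
    · intro i
      rw [dense_iff_closure_eq, Set.univ_eq_empty_iff.2 hX]
      simp
  have hκ : Nonempty (Quotient.out κ) := by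
    by_contra hempty
    rw [not_nonempty_iff] at hempty
    obtain ⟨S, -, hSne, D, hcov, -, -⟩ := h univ isOpen_univ ⟨hX.some, trivial⟩
    obtain ⟨x, hx⟩ := hSne
    have hmem : (⟨x, hx⟩ : S) ∈ (Set.univ : Set S) := trivial
    rw [← hcov] at hmem
    simp at hmem
  obtain ⟨i₀⟩ := hκ
  -- Zorn: maximal pairwise disjoint family of nonempty κ-resolvable subsets
  set 𝒮 : Set (Set (Set X)) :=
    {F | (∀ T ∈ F, T.Nonempty ∧ KResolvable κ T) ∧ F.PairwiseDisjoint id} with h𝒮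
  have hchaincond : ∀ c ⊆ 𝒮, IsChain (· ⊆ ·) c → ∃ ub ∈ 𝒮, ∀ s ∈ c, s ⊆ ub := by
    intro c hc hchain
    refine ⟨⋃₀ c, ⟨?_, ?_⟩, fun s hs => subset_sUnion_of_mem hs⟩
    · rintro T ⟨G, hGc, hTG⟩
      exact (hc hGc).1 T hTG
    · rintro T ⟨G, hGc, hTG⟩ T' ⟨G', hG'c, hT'G'⟩ hne
      rcases hchain.total hGc hG'c with hsub | hsub
      · exact (hc hG'c).2 (hsub hTG) hT'G' hne
      · exact (hc hGc).2 hTG (hsub hT'G') hne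
  obtain ⟨F, hFmem, hFmax⟩ : ∃ F ∈ 𝒮, ∀ G ∈ 𝒮, F ⊆ G → G ⊆ F := by
    obtain ⟨F, hF⟩ := zorn_subset 𝒮 hchaincond
    exact ⟨F, hF.prop, fun G hG hFG => hF.2 hG hFG⟩
  obtain ⟨hFgood, hFdisj⟩ := hFmem
  set S : Set X := ⋃₀ F with hS
  -- S is dense
  have hSdense : Dense S := by
    by_contra hnd
    have hne : ((closure S)ᶜ).Nonempty := by
      rw [Set.nonempty_compl]
      rwa [dense_iff_closure_eq] at hnd
    obtain ⟨T, hTsub, hTne, hTres⟩ := h (closure S)ᶜ isClosed_closure.isOpen_compl hne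
    have hTS : Disjoint T S := Set.disjoint_left.2 fun x hxT hxS =>
      hTsub hxT (subset_closure hxS)
    have hins : insert T F ∈ 𝒮 := by
      constructor
      · rintro T' (rfl | hT'F)
        · exact ⟨hTne, hTres⟩
        · exact hFgood T' hT'F
      · intro A hA B hB hAB
        rcases hA with rfl | hA <;> rcases hB with rfl | hB
        · exact absurd rfl hAB
        · exact hTS.mono_right (subset_sUnion_of_mem hB)
        · exact (hTS.mono_right (subset_sUnion_of_mem hA)).symm
        · exact hFdisj hA hB hAB
    have hTF : T ∈ F := hFmax _ hins (subset_insert _ _) (mem_insert _ _)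
    have : Disjoint T T := hTS.mono_right (subset_sUnion_of_mem hTF)
    obtain ⟨x, hx⟩ := hTne
    exact Set.disjoint_left.1 this hx hx
  -- choose partitions of the pieces
  choose D hcov hdisj hdens using fun T : F => (hFgood T.1 T.2).2
  set E : Quotient.out κ → Set X :=
    fun i => (⋃ T : F, Subtype.val '' (D T i)) ∪
      (if i = i₀ then Sᶜ else ∅) with hE
  refine ⟨E, ?_, ?_, ?_⟩
  · apply Set.eq_univ_of_forall
    intro x
    by_cases hxS : x ∈ S
    · obtain ⟨T, hTF, hxT⟩ := hxS
      have : (⟨x, hxT⟩ : T) ∈ ⋃ i, D ⟨T, hTF⟩ i := by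
        rw [hcov ⟨T, hTF⟩]; trivial
      obtain ⟨i, hi⟩ := Set.mem_iUnion.1 this
      exact Set.mem_iUnion.2 ⟨i, Or.inl (Set.mem_iUnion.2 ⟨⟨T, hTF⟩, ⟨_, hi, rfl⟩⟩)⟩
    · exact Set.mem_iUnion.2 ⟨i₀, Or.inr (by simp [hxS])⟩
  · intro i j hij
    rw [Function.onFun]
    rw [Set.disjoint_left]
    rintro x hxi hxj
    have hxS' : ∀ k, x ∈ (⋃ T : F, Subtype.val '' (D T k)) → x ∈ S := by
      rintro k hx
      obtain ⟨T, ⟨a, -, rfl⟩⟩ := Set.mem_iUnion.1 hx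
      exact ⟨T.1, T.2, a.2⟩
    rcases hxi with hxi | hxi
    · rcases hxj with hxj | hxj
      · obtain ⟨T, ⟨a, ha, rfl⟩⟩ := Set.mem_iUnion.1 hxi
        obtain ⟨T', ⟨b, hb, hba⟩⟩ := Set.mem_iUnion.1 hxj
        by_cases hTT' : T = T'
        · subst hTT'
          have : b = a := Subtype.ext hba
          subst this
          exact Set.disjoint_left.1 (hdisj T hij) ha hb
        · have : Disjoint T.1 T'.1 := hFdisj T.2 T'.2 (fun hh => hTT' (Subtype.ext hh))
          exact Set.disjoint_left.1 this a.2 (hba ▸ b.2)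
      · split_ifs at hxj with hj
        · exact hxj (hxS' i hxi)
        · exact hxj
    · split_ifs at hxi with hi
      · rcases hxj with hxj | hxj
        · exact hxi (hxS' j hxj)
        · split_ifs at hxj with hj
          · exact hij (hi.trans hj.symm)
          · exact hxj
      · exact hxi
  · intro i
    have hsub : S ⊆ closure (E i) := by
      rintro x ⟨T, hTF, hxT⟩
      have hx : (⟨x, hxT⟩ : T) ∈ closure (D ⟨T, hTF⟩ i) := hdens ⟨T, hTF⟩ i _
      rw [closure_subtype] at hx
      refine closure_mono ?_ hx
      intro y hy
      exact Or.inl (Set.mem_iUnion.2 ⟨⟨T, hTF⟩, hy⟩)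
    exact dense_closure.1 (hSdense.mono hsub)
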